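/- Let f : ℝ^N → ℝ^N, h : ℝ^N → ℝ^M, K : ℝ^M → ℝ^N be C¹ maps with f(0)=0, h(0)=0, K(0)=0, and suppose there exist constants 0 < a ≤ b such that a·I_N ≤ Df(x)ᵀDf(x) ≤ b·I_N for all x ∈ ℝ^N. Fix 0 < p < 1 and set 𝒜(x,ξ) := Df(x) − ξ·D(K∘h)(x) for ξ ∈ {0,1}. Suppose the linearized error dynamics η_{t+1} = 𝒜(x_t, ξ_t) η_t along x_{t+1} = f(x_t) is MSE stable: there exist L < ∞, 0 < β < 1 with E_{ξ_0^t}[‖η_{t+1}‖²] ≤ L β^t ‖η_0‖² for all x_0, η_0 ∈ ℝ^N and t ≥ 0. Then there exist constants 0 < γ_1 ≤ γ_2 and a map P : ℝ^N → Sym(N,ℝ) such that γ_1·I_N ≤ P(x) ≤ γ_2·I_N for all x, and for all x ∈ ℝ^N: p·𝒜(x,1)ᵀ P(f(x)) 𝒜(x,1) + (1−p)·𝒜(x,0)ᵀ P(f(x)) 𝒜(x,0) < P(x) in the Loewner order. -/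

import Mathlib

open Matrix

noncomputable section

abbrev Euc (n : ℕ) := EuclideanSpace ℝ (Fin n)

/-- Expectation over i.i.d. Bernoulli(p) erasure prefixes (ξ_0,…,ξ_t). -/
def erasureExp (p : ℝ) (t : ℕ) (G : (ℕ → Bool) → ℝ) : ℝ :=
  ∑ s : Fin (t + 1) → Bool,
    (∏ i, if s i then p else 1 - p) *
      G (fun n => if h : n < t + 1 then s ⟨n, h⟩ else false)

/-- Jacobian matrix of a map between Euclidean spaces, in the standard bases. -/
def jac {ι κ : Type*} [Fintype ι] [Fintype κ] [DecidableEq ι] [DecidableEq κ]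
    (f : EuclideanSpace ℝ ι → EuclideanSpace ℝ κ) (x : EuclideanSpace ℝ ι) :
    Matrix κ ι ℝ :=
  LinearMap.toMatrix (EuclideanSpace.basisFun ι ℝ).toBasis
    (EuclideanSpace.basisFun κ ℝ).toBasis (fderiv ℝ f x : _ →ₗ[ℝ] _)

variable {N M : ℕ}

/-- `𝒜(x, ξ) := Df(x) − ξ·D(K∘h)(x)`. -/
def calA (f : Euc N → Euc N) (h : Euc N → Euc M) (K : Euc M → Euc N)
    (x : Euc N) (ξ : Bool) : Matrix (Fin N) (Fin N) ℝ :=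
  jac f x - (if ξ then (1 : ℝ) else 0) • jac (K ∘ h) x

/-- Linearized error dynamics `η_{t+1} = 𝒜(x_t, ξ_t) η_t` along `x_{t+1} = f(x_t)`. -/
def etaSeqA (f : Euc N → Euc N) (h : Euc N → Euc M) (K : Euc M → Euc N)
    (x0 η0 : Euc N) (ξ : ℕ → Bool) : ℕ → Euc N
  | 0 => η0
  | t + 1 => toEuclideanLin (calA f h K (f^[t] x0) (ξ t)) (etaSeqA f h K x0 η0 ξ t)

/-! ### Auxiliary development -/

/-- Product of the `calA` matrices along the trajectory. -/
def prodA (f : Euc N → Euc N) (h : Euc N → Euc M) (K : Euc M → Euc N)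
    (x : Euc N) (ξ : ℕ → Bool) : ℕ → Matrix (Fin N) (Fin N) ℝ
  | 0 => 1
  | t + 1 => calA f h K (f^[t] x) (ξ t) * prodA f h K x ξ t

lemma etaSeqA_eq (f : Euc N → Euc N) (h : Euc N → Euc M) (K : Euc M → Euc N)
    (x0 η0 : Euc N) (ξ : ℕ → Bool) (t : ℕ) :
    etaSeqA f h K x0 η0 ξ t = toEuclideanLin (prodA f h K x0 ξ t) η0 := by
  induction t with
  | zero =>
      show η0 = toEuclideanLin (1 : Matrix (Fin N) (Fin N) ℝ) η0
      simp [toEuclideanLin_apply]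
  | succ t ih =>
      rw [etaSeqA, ih, prodA]
      simp [toEuclideanLin_apply, mulVec_mulVec]

lemma prodA_succ (f : Euc N → Euc N) (h : Euc N → Euc M) (K : Euc M → Euc N)
    (x : Euc N) (ξ : ℕ → Bool) (t : ℕ) :
    prodA f h K x ξ (t + 1) =
      prodA f h K (f x) (ξ ∘ Nat.succ) t * calA f h K x (ξ 0) := by
  induction t with
  | zero => simp [prodA]
  | succ t ih =>
      rw [prodA, ih, Function.iterate_succ_apply f t x,
        show prodA f h K (f x) (ξ ∘ Nat.succ) (t + 1) =
          calA f h K (f^[t] (f x)) (ξ (t + 1)) * prodA f h K (f x) (ξ ∘ Nat.succ) t from rfl,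
        mul_assoc]

/-- extend a finite erasure prefix by `false` -/
def extb (t : ℕ) (s : Fin t → Bool) : ℕ → Bool :=
  fun n => if h : n < t then s ⟨n, h⟩ else false

lemma extb_cons (t : ℕ) (b : Bool) (s : Fin t → Bool) :
    extb (t + 1) (Fin.cons b s) ∘ Nat.succ = extb t s := by
  funext n
  simp only [Function.comp_apply, extb]
  by_cases hn : n < t
  · rw [dif_pos hn, dif_pos (Nat.succ_lt_succ hn)]
    exact Fin.cons_succ (α := fun _ : Fin (t + 1) => Bool) b s ⟨n, hn⟩
  · rw [dif_neg hn, dif_neg (fun hc => hn (Nat.lt_of_succ_lt_succ hc))]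

lemma extb_cons_zero (t : ℕ) (b : Bool) (s : Fin t → Bool) :
    extb (t + 1) (Fin.cons b s) 0 = b := by
  simp [extb]

/-- expected `Φᵀ Φ` over erasure prefixes of length `t` -/
def Smat (f : Euc N → Euc N) (h : Euc N → Euc M) (K : Euc M → Euc N)
    (p : ℝ) (x : Euc N) (t : ℕ) : Matrix (Fin N) (Fin N) ℝ :=
  ∑ s : Fin t → Bool,
    (∏ i, if s i then p else 1 - p) •
      ((prodA f h K x (extb t s) t)ᵀ * prodA f h K x (extb t s) t)

lemma Smat_zero (f : Euc N → Euc N) (h : Euc N → Euc M) (K : Euc M → Euc N)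
    (p : ℝ) (x : Euc N) : Smat f h K p x 0 = 1 := by
  simp [Smat, prodA]

lemma Smat_succ (f : Euc N → Euc N) (h : Euc N → Euc M) (K : Euc M → Euc N)
    (p : ℝ) (x : Euc N) (t : ℕ) :
    Smat f h K p x (t + 1) =
      p • ((calA f h K x true)ᵀ * Smat f h K p (f x) t * calA f h K x true) +
      (1 - p) • ((calA f h K x false)ᵀ * Smat f h K p (f x) t * calA f h K x false) := by
  rw [Smat, ← (Fin.consEquiv (fun _ : Fin (t+1) => Bool)).sum_comp, Fintype.sum_prod_type]
  rw [Fintype.sum_bool]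
  have key : ∀ (b : Bool) (s : Fin t → Bool),
      (∏ i, if (Fin.consEquiv (fun _ : Fin (t+1) => Bool) (b, s)) i then p else 1 - p) •
        ((prodA f h K x (extb (t+1) (Fin.consEquiv _ (b, s))) (t+1))ᵀ *
          prodA f h K x (extb (t+1) (Fin.consEquiv _ (b, s))) (t+1)) =
      (if b then p else 1 - p) •
        ((calA f h K x b)ᵀ * ((∏ i, if s i then p else 1 - p) •
          ((prodA f h K (f x) (extb t s) t)ᵀ * prodA f h K (f x) (extb t s) t)) *
          calA f h K x b) := by
    intro b s
    have hc : (Fin.consEquiv (fun _ : Fin (t+1) => Bool)) (b, s) = Fin.cons b s := rfl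
    rw [hc, prodA_succ, extb_cons, extb_cons_zero, Fin.prod_univ_succ]
    simp only [Fin.cons_zero, Fin.cons_succ]
    simp only [transpose_mul, mul_smul, mul_assoc, Matrix.mul_smul,
      Matrix.smul_mul]
  simp only [key]
  rw [Smat]
  simp only [← Finset.smul_sum, ← Finset.sum_mul, ← Finset.mul_sum]
  simp

lemma normsq_eq (w : Fin N → ℝ) :
    ‖(WithLp.equiv 2 (Fin N → ℝ)).symm w‖ ^ 2 = w ⬝ᵥ w := by
  rw [EuclideanSpace.norm_eq, Real.sq_sqrt (by positivity)]
  simp [dotProduct, sq]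

lemma dot_tmul (P : Matrix (Fin N) (Fin N) ℝ) (v : Fin N → ℝ) :
    v ⬝ᵥ (Pᵀ * P) *ᵥ v = (P *ᵥ v) ⬝ᵥ (P *ᵥ v) := by
  rw [← mulVec_mulVec, dotProduct_mulVec, vecMul_transpose]

lemma dot_sum_mulVec {σ : Type*} (s : Finset σ) (Mf : σ → Matrix (Fin N) (Fin N) ℝ)
    (v w : Fin N → ℝ) :
    v ⬝ᵥ (∑ x ∈ s, Mf x) *ᵥ w = ∑ x ∈ s, v ⬝ᵥ Mf x *ᵥ w := by
  induction s using Finset.cons_induction with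
  | empty => simp
  | cons a s ha ih => simp [Finset.sum_cons, add_mulVec, dotProduct_add, ih]

lemma dot_hasSum (Sf : ℕ → Matrix (Fin N) (Fin N) ℝ)
    (hs : ∀ i j, Summable fun t => Sf t i j) (v w : Fin N → ℝ) :
    HasSum (fun t => v ⬝ᵥ Sf t *ᵥ w)
      (v ⬝ᵥ (Matrix.of fun i j => ∑' t, Sf t i j) *ᵥ w) := by
  have h1 : ∀ (S : Matrix (Fin N) (Fin N) ℝ),
      v ⬝ᵥ S *ᵥ w = ∑ i, ∑ j, v i * (S i j * w j) := by
    intro S; simp [dotProduct, mulVec, Finset.mul_sum]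
  simp only [h1, of_apply]
  exact hasSum_sum fun i _ => hasSum_sum fun j _ =>
    ((hs i j).hasSum.mul_right (w j)).mul_left (v i)

lemma conj_entry (A S B : Matrix (Fin N) (Fin N) ℝ) (i j : Fin N) :
    (Aᵀ * S * B) i j = (fun k => A k i) ⬝ᵥ S *ᵥ (fun l => B l j) := by
  simp only [mul_apply, dotProduct, mulVec, transpose_apply, Finset.sum_mul, Finset.mul_sum]
  rw [Finset.sum_comm]
  simp [mul_assoc]

lemma polar_eq (S : Matrix (Fin N) (Fin N) ℝ) (hS : S.IsSymm) (i j : Fin N) :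
    2 * S i j = (Pi.single i 1 + Pi.single j 1) ⬝ᵥ S *ᵥ (Pi.single i 1 + Pi.single j 1)
      - Pi.single i 1 ⬝ᵥ S *ᵥ Pi.single i 1 - Pi.single j 1 ⬝ᵥ S *ᵥ Pi.single j 1 := by
  have hsym : S j i = S i j := by rw [← hS.apply]
  simp [add_dotProduct, dotProduct_add, mulVec_add, mulVec_single,
    single_dotProduct, hsym]
  ring

lemma dot_Smat_eq_erasure (f : Euc N → Euc N) (h : Euc N → Euc M) (K : Euc M → Euc N)
    (p : ℝ) (x : Euc N) (v : Fin N → ℝ) (t : ℕ) :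
    v ⬝ᵥ Smat f h K p x (t + 1) *ᵥ v =
      erasureExp p t (fun ξ =>
        ‖etaSeqA f h K x ((WithLp.equiv 2 (Fin N → ℝ)).symm v) ξ (t + 1)‖ ^ 2) := by
  rw [erasureExp, Smat, dot_sum_mulVec]
  apply Finset.sum_congr rfl
  intro s _
  have hext : (fun n => if h : n < t + 1 then s ⟨n, h⟩ else false) = extb (t + 1) s := rfl
  rw [hext, etaSeqA_eq, (show ∀ (A : Matrix (Fin N) (Fin N) ℝ) (w : Fin N → ℝ),
      toEuclideanLin A ((WithLp.equiv 2 (Fin N → ℝ)).symm w) =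
        (WithLp.equiv 2 (Fin N → ℝ)).symm (A *ᵥ w) from fun _ _ => rfl), normsq_eq, ← dot_tmul,
    smul_mulVec, dotProduct_smul, smul_eq_mul]

lemma Smat_isSymm (f : Euc N → Euc N) (h : Euc N → Euc M) (K : Euc M → Euc N)
    (p : ℝ) (x : Euc N) (t : ℕ) : (Smat f h K p x t).IsSymm := by
  unfold Matrix.IsSymm Smat
  rw [transpose_sum]
  apply Finset.sum_congr rfl
  intro s _
  rw [transpose_smul, transpose_mul, transpose_transpose]

lemma dot_Smat_nonneg (f : Euc N → Euc N) (h : Euc N → Euc M) (K : Euc M → Euc N)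
    {p : ℝ} (hp0 : 0 ≤ p) (hp1 : p ≤ 1) (x : Euc N) (v : Fin N → ℝ) (t : ℕ) :
    0 ≤ v ⬝ᵥ Smat f h K p x t *ᵥ v := by
  rw [Smat, dot_sum_mulVec]
  refine Finset.sum_nonneg fun s _ => ?_
  rw [smul_mulVec, dotProduct_smul, smul_eq_mul, dot_tmul]
  refine mul_nonneg (Finset.prod_nonneg fun i _ => ?_)
    (Finset.sum_nonneg fun i _ => mul_self_nonneg _)
  by_cases hb : s i <;> simp [hb] <;> linarith

set_option maxHeartbeats 1000000 in
/-- MSE stability of the linearized error dynamics implies the existence of a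
uniformly bounded matrix Lyapunov function `P` with
`E_ξ[𝒜(x,ξ)ᵀ P(f(x)) 𝒜(x,ξ)] < P(x)` in the Loewner order. -/
theorem exists_matrix_lyapunov_P_of_mse_stable
    (f : Euc N → Euc N) (h : Euc N → Euc M) (K : Euc M → Euc N)
    (hf : ContDiff ℝ 1 f) (hh : ContDiff ℝ 1 h) (hK : ContDiff ℝ 1 K)
    (hf0 : f 0 = 0) (hh0 : h 0 = 0) (hK0 : K 0 = 0)
    (a b : ℝ) (ha : 0 < a) (hab : a ≤ b)
    (hJac : ∀ x : Euc N,
      ((jac f x)ᵀ * jac f x - a • (1 : Matrix (Fin N) (Fin N) ℝ)).PosSemidef ∧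
      (b • (1 : Matrix (Fin N) (Fin N) ℝ) - (jac f x)ᵀ * jac f x).PosSemidef)
    (p : ℝ) (hp0 : 0 < p) (hp1 : p < 1)
    (L β : ℝ) (hβ0 : 0 < β) (hβ1 : β < 1)
    (hMSE : ∀ (x0 η0 : Euc N) (t : ℕ),
      erasureExp p t (fun ξ => ‖etaSeqA f h K x0 η0 ξ (t + 1)‖ ^ 2) ≤
        L * β ^ t * ‖η0‖ ^ 2) :
    ∃ (γ₁ γ₂ : ℝ) (P : Euc N → Matrix (Fin N) (Fin N) ℝ),
      0 < γ₁ ∧ γ₁ ≤ γ₂ ∧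
      (∀ x : Euc N, (P x).IsSymm) ∧
      (∀ x : Euc N,
        (P x - γ₁ • (1 : Matrix (Fin N) (Fin N) ℝ)).PosSemidef ∧
        (γ₂ • (1 : Matrix (Fin N) (Fin N) ℝ) - P x).PosSemidef) ∧
      (∀ x : Euc N,
        (P x -
          (p • ((calA f h K x true)ᵀ * P (f x) * calA f h K x true) +
           (1 - p) • ((calA f h K x false)ᵀ * P (f x) * calA f h K x false))).PosDef) := by
  classical
  set L' : ℝ := max L 0 with hL'def
  have hL'0 : 0 ≤ L' := le_max_right _ _
  have hβ0' : (0 : ℝ) ≤ β := hβ0.le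
  -- upper bound on the quadratic forms
  have hupper : ∀ (x : Euc N) (v : Fin N → ℝ) (t : ℕ),
      v ⬝ᵥ Smat f h K p x (t + 1) *ᵥ v ≤ L' * β ^ t * (v ⬝ᵥ v) := by
    intro x v t
    have h1 := dot_Smat_eq_erasure f h K p x v t
    have h2 := hMSE x ((WithLp.equiv 2 (Fin N → ℝ)).symm v) t
    rw [normsq_eq] at h2
    have hvv : 0 ≤ v ⬝ᵥ v := Finset.sum_nonneg fun i _ => mul_self_nonneg _
    have h3 : L * β ^ t * (v ⬝ᵥ v) ≤ L' * β ^ t * (v ⬝ᵥ v) :=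
      mul_le_mul_of_nonneg_right
        (mul_le_mul_of_nonneg_right (le_max_left L 0) (pow_nonneg hβ0' t)) hvv
    rw [← h1] at h2
    linarith
  have hnn : ∀ (x : Euc N) (v : Fin N → ℝ) (t : ℕ),
      0 ≤ v ⬝ᵥ Smat f h K p x t *ᵥ v :=
    fun x v t => dot_Smat_nonneg f h K hp0.le hp1.le x v t
  -- summability of entries
  have hsum : ∀ (x : Euc N) (i j : Fin N), Summable fun t => Smat f h K p x t i j := by
    intro x i j
    have hbound : ∀ t : ℕ, |Smat f h K p x (t + 1) i j| ≤ 3 * (L' * β ^ t) := by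
      intro t
      set S := Smat f h K p x (t + 1) with hSdef
      set C := L' * β ^ t with hCdef
      have hC : 0 ≤ C := mul_nonneg hL'0 (pow_nonneg hβ0' t)
      have hpol := polar_eq S (Smat_isSymm f h K p x (t + 1)) i j
      have hqi : Pi.single i 1 ⬝ᵥ S *ᵥ Pi.single i 1 ≤ C * (Pi.single i 1 ⬝ᵥ (Pi.single i 1 : Fin N → ℝ)) := hupper x _ t
      have hqj : Pi.single j 1 ⬝ᵥ S *ᵥ Pi.single j 1 ≤ C * (Pi.single j 1 ⬝ᵥ (Pi.single j 1 : Fin N → ℝ)) := hupper x _ t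
      have hqu : (Pi.single i 1 + Pi.single j 1) ⬝ᵥ S *ᵥ (Pi.single i 1 + Pi.single j 1) ≤
          C * ((Pi.single i 1 + Pi.single j 1) ⬝ᵥ ((Pi.single i 1 : Fin N → ℝ) + Pi.single j 1)) := hupper x _ t
      have hnqi := hnn x (Pi.single i 1) (t + 1)
      have hnqj := hnn x (Pi.single j 1) (t + 1)
      have hnqu := hnn x (Pi.single i 1 + Pi.single j 1) (t + 1)
      have hsi : (Pi.single i 1 : Fin N → ℝ) ⬝ᵥ Pi.single i 1 = 1 := by
        simp [single_dotProduct]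
      have hsj : (Pi.single j 1 : Fin N → ℝ) ⬝ᵥ Pi.single j 1 = 1 := by
        simp [single_dotProduct]
      have hsu : (Pi.single i 1 + Pi.single j 1) ⬝ᵥ ((Pi.single i 1 : Fin N → ℝ) + Pi.single j 1) ≤ 4 := by
        simp only [add_dotProduct, dotProduct_add, single_dotProduct, one_mul,
          Pi.single_apply]
        by_cases hij : i = j
        · simp [hij]; norm_num
        · simp [hij, show ¬ j = i from fun hji => hij hji.symm]
          norm_num
      rw [hsi] at hqi
      rw [hsj] at hqj
      have hqu4 : (Pi.single i 1 + Pi.single j 1) ⬝ᵥ S *ᵥ (Pi.single i 1 + Pi.single j 1) ≤ C * 4 :=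
        le_trans hqu (mul_le_mul_of_nonneg_left hsu hC)
      rw [← hSdef] at hnqi hnqj hnqu
      rw [abs_le]
      constructor <;> linarith
    have hgeo : Summable fun t : ℕ => 3 * (L' * β ^ t) :=
      ((summable_geometric_of_lt_one hβ0' hβ1).mul_left L').mul_left 3
    have h2 : Summable fun t => Smat f h K p x (t + 1) i j := by
      refine Summable.of_norm_bounded hgeo fun t => ?_
      simpa [Real.norm_eq_abs] using hbound t
    exact (summable_nat_add_iff (f := fun t => Smat f h K p x t i j) 1).mp h2
  -- the Lyapunov matrix
  set P : Euc N → Matrix (Fin N) (Fin N) ℝ :=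
    fun x => Matrix.of fun i j => ∑' t, Smat f h K p x t i j with hPdef
  have hq : ∀ (x : Euc N) (v w : Fin N → ℝ),
      HasSum (fun t => v ⬝ᵥ Smat f h K p x t *ᵥ w) (v ⬝ᵥ P x *ᵥ w) :=
    fun x v w => dot_hasSum _ (hsum x) v w
  have hPsymm : ∀ x : Euc N, (P x).IsSymm := by
    intro x
    unfold Matrix.IsSymm
    ext i j
    rw [transpose_apply]
    exact tsum_congr fun t => (Smat_isSymm f h K p x t).apply i j
  have hstar : ∀ v : Fin N → ℝ, star v = v := fun v => funext fun i => star_trivial _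
  have h1β : 0 < 1 - β := by linarith
  refine ⟨1, 1 + L' * (1 - β)⁻¹, P, one_pos, ?_, hPsymm, ?_, ?_⟩
  · have : 0 ≤ L' * (1 - β)⁻¹ := mul_nonneg hL'0 (inv_nonneg.2 h1β.le)
    linarith
  · intro x
    constructor
    · refine Matrix.PosSemidef.of_dotProduct_mulVec_nonneg ?_ ?_
      · rw [Matrix.IsHermitian, conjTranspose_eq_transpose_of_trivial, transpose_sub,
          transpose_smul, transpose_one, hPsymm x]
      · intro v
        rw [hstar, sub_mulVec, dotProduct_sub, one_smul, one_mulVec]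
        have hq0 : v ⬝ᵥ Smat f h K p x 0 *ᵥ v = v ⬝ᵥ v := by
          rw [Smat_zero, one_mulVec]
        have hle : v ⬝ᵥ Smat f h K p x 0 *ᵥ v ≤ ∑' t, v ⬝ᵥ Smat f h K p x t *ᵥ v :=
          Summable.le_tsum (hq x v v).summable 0 fun t _ => hnn x v t
        rw [(hq x v v).tsum_eq] at hle
        rw [hq0] at hle
        linarith
    · refine Matrix.PosSemidef.of_dotProduct_mulVec_nonneg ?_ ?_
      · rw [Matrix.IsHermitian, conjTranspose_eq_transpose_of_trivial, transpose_sub,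
          transpose_smul, transpose_one, hPsymm x]
      · intro v
        rw [hstar, sub_mulVec, dotProduct_sub, smul_mulVec, one_mulVec,
          dotProduct_smul, smul_eq_mul]
        have hvv : 0 ≤ v ⬝ᵥ v := Finset.sum_nonneg fun i _ => mul_self_nonneg _
        have hsummable := (hq x v v).summable
        have hsucc : Summable fun t => v ⬝ᵥ Smat f h K p x (t + 1) *ᵥ v :=
          (summable_nat_add_iff (f := fun t => v ⬝ᵥ Smat f h K p x t *ᵥ v) 1).mpr hsummable
        have hgeo : Summable fun t : ℕ => L' * β ^ t * (v ⬝ᵥ v) := by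
          have := (summable_geometric_of_lt_one hβ0' hβ1).mul_left L'
          exact this.mul_right _
        have htail : (∑' t, v ⬝ᵥ Smat f h K p x (t + 1) *ᵥ v) ≤
            ∑' t : ℕ, L' * β ^ t * (v ⬝ᵥ v) :=
          Summable.tsum_le_tsum (fun t => hupper x v t) hsucc hgeo
        have hgeoval : (∑' t : ℕ, L' * β ^ t * (v ⬝ᵥ v)) = L' * (1 - β)⁻¹ * (v ⬝ᵥ v) := by
          have : (fun t : ℕ => L' * β ^ t * (v ⬝ᵥ v)) =
              fun t : ℕ => (L' * (v ⬝ᵥ v)) * β ^ t := by funext t; ring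
          rw [this, tsum_mul_left, tsum_geometric_of_lt_one hβ0' hβ1]
          ring
        have hq0 : v ⬝ᵥ Smat f h K p x 0 *ᵥ v = v ⬝ᵥ v := by
          rw [Smat_zero, one_mulVec]
        have hsplit : v ⬝ᵥ P x *ᵥ v = v ⬝ᵥ v + ∑' t, v ⬝ᵥ Smat f h K p x (t + 1) *ᵥ v := by
          rw [← (hq x v v).tsum_eq, Summable.tsum_eq_zero_add hsummable, hq0]
        rw [hgeoval] at htail
        rw [hsplit]
        nlinarith
  · intro x
    have hident : P x -
        (p • ((calA f h K x true)ᵀ * P (f x) * calA f h K x true) +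
         (1 - p) • ((calA f h K x false)ᵀ * P (f x) * calA f h K x false)) = 1 := by
      ext i j
      have hA1 : HasSum (fun t => ((calA f h K x true)ᵀ * Smat f h K p (f x) t * calA f h K x true) i j)
          (((calA f h K x true)ᵀ * P (f x) * calA f h K x true) i j) := by
        simp only [conj_entry]
        exact dot_hasSum _ (hsum (f x)) _ _
      have hA0 : HasSum (fun t => ((calA f h K x false)ᵀ * Smat f h K p (f x) t * calA f h K x false) i j)
          (((calA f h K x false)ᵀ * P (f x) * calA f h K x false) i j) := by
        simp only [conj_entry]
        exact dot_hasSum _ (hsum (f x)) _ _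
      have hcombo := (hA1.mul_left p).add (hA0.mul_left (1 - p))
      have hentry : ∀ t : ℕ, Smat f h K p x (t + 1) i j =
          p * ((calA f h K x true)ᵀ * Smat f h K p (f x) t * calA f h K x true) i j +
          (1 - p) * ((calA f h K x false)ᵀ * Smat f h K p (f x) t * calA f h K x false) i j := by
        intro t
        rw [Smat_succ]
        simp [Matrix.add_apply, Matrix.smul_apply, smul_eq_mul]
      have htail : (∑' t, Smat f h K p x (t + 1) i j) =
          p * ((calA f h K x true)ᵀ * P (f x) * calA f h K x true) i j +
          (1 - p) * ((calA f h K x false)ᵀ * P (f x) * calA f h K x false) i j := by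
        rw [show (fun t => Smat f h K p x (t + 1) i j) = fun t =>
          p * ((calA f h K x true)ᵀ * Smat f h K p (f x) t * calA f h K x true) i j +
          (1 - p) * ((calA f h K x false)ᵀ * Smat f h K p (f x) t * calA f h K x false) i j
          from funext hentry]
        exact hcombo.tsum_eq
      have hP : P x i j = Smat f h K p x 0 i j + ∑' t, Smat f h K p x (t + 1) i j := by
        exact Summable.tsum_eq_zero_add (hsum x i j)
      rw [Matrix.sub_apply, Matrix.add_apply, Matrix.smul_apply, Matrix.smul_apply,
        smul_eq_mul, smul_eq_mul, hP, htail, Smat_zero]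
      ring
    rw [hident]
    exact Matrix.PosDef.one

end
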